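/- For n ≥ 2r and r ≥ λ, any simple partial r×r λ-Latin square on symbol set [r] can be extended to a simple n×n λ-Latin square on symbol set [n]. -/

import Mathlib

/-
  Proof that any simple partial r×r λ-Latin square on [r] extends to a simple
  n×n λ-Latin square on [n] when n ≥ 2r and r ≥ λ.

  Outline:
  * `CT`: a capacitated transportation theorem (existence of a ℕ-matrix with
    prescribed row/column sums and entry capacities, given a Hall/Hoffman-type
    cut condition), proved by induction with submodular uncrossing of tight cuts.
  * `STEP`: from a "deficiency" matrix D with row sums K*L, entries ≤ K and
    column sums ≤ K*L one can split off a 0-1 matrix with row sums L which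
    contains all cells with D = K, has column sums ≤ L and leaves column sums
    ≤ (K-1)*L.  Proved by applying `CT` to an instance with a dummy row.
  * `FOLD`: iterating `STEP` decomposes such a D into K layers.
  * corner lemmas: an explicit "diagonal" filling completes the partial corner.
  * the main theorem assembles the square: corner + Phase B (right block via
    FOLD) + Phase C (bottom rows via FOLD).
-/

open Finset



section CT
variable {ι κ : Type*} [Fintype ι] [Fintype κ] [DecidableEq ι] [DecidableEq κ]

lemma sum_indicator' (S : Finset ι) (f : ι → ℕ) :
    ∑ x ∈ S, f x = ∑ x : ι, if x ∈ S then f x else 0 := by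
  rw [Finset.sum_ite_mem, Finset.univ_inter]

lemma sum_ind_eq (S : Finset ι) (x₀ : ι) :
    (∑ x ∈ S, if x = x₀ then (1:ℕ) else 0) = if x₀ ∈ S then 1 else 0 :=
  Finset.sum_ite_eq' S x₀ (fun _ => (1:ℕ))

lemma sum_sum_ite (S : Finset ι) (W : Finset κ) (u : ι → κ → ℕ) :
    ∑ x ∈ S, ∑ y ∈ W, u x y
      = ∑ x : ι, ∑ y : κ, if x ∈ S ∧ y ∈ W then u x y else 0 := by
  rw [sum_indicator' S]
  apply Finset.sum_congr rfl
  intro x _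
  by_cases hx : x ∈ S
  · simp only [hx, if_true, true_and]
    rw [sum_indicator' W]
  · simp [hx]

/-- capacity of a "cut" (S,V): edges from S to Vᶜ plus C-demands inside V. -/
def Acap (C : κ → ℕ) (u : ι → κ → ℕ) (S : Finset ι) (V : Finset κ) : ℕ :=
  (∑ x ∈ S, ∑ y ∈ Vᶜ, u x y) + ∑ y ∈ V, C y

lemma Acap_submod (C : κ → ℕ) (u : ι → κ → ℕ) (S S' : Finset ι) (V V' : Finset κ) :
    Acap C u (S ∪ S') (V ∪ V') + Acap C u (S ∩ S') (V ∩ V')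
      ≤ Acap C u S V + Acap C u S' V' := by
  unfold Acap
  have hC : ∑ y ∈ (V ∪ V'), C y + ∑ y ∈ (V ∩ V'), C y = ∑ y ∈ V, C y + ∑ y ∈ V', C y :=
    Finset.sum_union_inter
  have e1 := sum_sum_ite (S ∪ S') (V ∪ V')ᶜ u
  have e2 := sum_sum_ite (S ∩ S') (V ∩ V')ᶜ u
  have e3 := sum_sum_ite S Vᶜ u
  have e4 := sum_sum_ite S' V'ᶜ u
  have hu : (∑ x ∈ (S ∪ S'), ∑ y ∈ (V ∪ V')ᶜ, u x y)
      + (∑ x ∈ (S ∩ S'), ∑ y ∈ (V ∩ V')ᶜ, u x y)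
      ≤ (∑ x ∈ S, ∑ y ∈ Vᶜ, u x y) + (∑ x ∈ S', ∑ y ∈ V'ᶜ, u x y) := by
    rw [e1, e2, e3, e4, ← Finset.sum_add_distrib, ← Finset.sum_add_distrib]
    apply Finset.sum_le_sum
    intro x _
    rw [← Finset.sum_add_distrib, ← Finset.sum_add_distrib]
    apply Finset.sum_le_sum
    intro y _
    by_cases h1 : x ∈ S <;> by_cases h2 : x ∈ S' <;> by_cases h3 : y ∈ V <;> by_cases h4 : y ∈ V' <;>
      simp [h1, h2, h3, h4] <;> omega
  omega

theorem CTaux :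
    ∀ (N : ℕ) (R : ι → ℕ) (C : κ → ℕ) (u : ι → κ → ℕ),
      ∑ x, R x = N → ∑ x, R x = ∑ y, C y →
      (∀ S V, ∑ x ∈ S, R x ≤ Acap C u S V) →
      ∃ X : ι → κ → ℕ, (∀ x y, X x y ≤ u x y) ∧ (∀ x, ∑ y, X x y = R x) ∧
        (∀ y, ∑ x, X x y = C y) := by
  intro N
  induction N using Nat.strong_induction_on with
  | _ N ih =>
  intro R C u hN htot hcond
  rcases Nat.eq_zero_or_pos N with hN0 | hN0
  · subst hN0
    have hR : ∀ x, R x = 0 := by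
      intro x
      exact (Finset.sum_eq_zero_iff.mp hN) x (mem_univ x)
    have hC : ∀ y, C y = 0 := by
      have h0 : ∑ y, C y = 0 := by omega
      intro y
      exact (Finset.sum_eq_zero_iff.mp h0) y (mem_univ y)
    exact ⟨fun _ _ => 0, fun x y => Nat.zero_le _, fun x => by simp [hR], fun y => by simp [hC]⟩
  · have hx0 : ∃ x₀, R x₀ ≠ 0 := by
      by_contra h
      push_neg at h
      simp only [h, Finset.sum_const_zero] at hN
      omega
    obtain ⟨x₀, hx0⟩ := hx0
    classical
    set tight : Finset ι × Finset κ → Prop :=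
      fun p => x₀ ∉ p.1 ∧ ∑ x ∈ p.1, R x = Acap C u p.1 p.2 with htight
    have tight_union : ∀ p q, tight p → tight q →
        tight (p.1 ∪ q.1, p.2 ∪ q.2) := by
      rintro ⟨S, V⟩ ⟨S', V'⟩ ⟨hp1, hp2⟩ ⟨hq1, hq2⟩
      have hp2' : ∑ x ∈ S, R x = Acap C u S V := hp2
      have hq2' : ∑ x ∈ S', R x = Acap C u S' V' := hq2
      refine ⟨?_, ?_⟩
      · simp only [Finset.mem_union]
        tauto
      · show ∑ x ∈ S ∪ S', R x = Acap C u (S ∪ S') (V ∪ V')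
        have hsub := Acap_submod C u S S' V V'
        have h1 := hcond (S ∪ S') (V ∪ V')
        have h2 := hcond (S ∩ S') (V ∩ V')
        have hBmod : ∑ x ∈ (S ∪ S'), R x + ∑ x ∈ (S ∩ S'), R x
            = ∑ x ∈ S, R x + ∑ x ∈ S', R x := Finset.sum_union_inter
        omega
    set TS : Finset (Finset ι × Finset κ) := univ.filter tight with hTS
    have tight_sup : ∀ (l : Finset (Finset ι × Finset κ)), (∀ p ∈ l, tight p) →
        tight (l.sup Prod.fst, l.sup Prod.snd) := by
      intro l
      induction l using Finset.induction_on with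
      | empty =>
        intro _
        refine ⟨?_, ?_⟩
        · simp
        · show ∑ x ∈ (∅ : Finset ι), R x = Acap C u ∅ ∅
          simp [Acap]
      | insert p l' hnotmem ihl =>
        intro hl
        rw [Finset.sup_insert, Finset.sup_insert]
        exact tight_union p (l'.sup Prod.fst, l'.sup Prod.snd)
          (hl p (mem_insert_self p l')) (ihl fun q hq => hl q (mem_insert_of_mem hq))
    set S₁ := TS.sup Prod.fst with hS₁
    set V₁ := TS.sup Prod.snd with hV₁
    have htight₁ : x₀ ∉ S₁ ∧ ∑ x ∈ S₁, R x = Acap C u S₁ V₁ := by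
      have h := tight_sup TS (fun p hp => (Finset.mem_filter.mp (hTS ▸ hp)).2)
      exact h
    set Vz : Finset κ := univ.filter (fun y => C y = 0) with hVz
    have htight₂ : ∑ x ∈ S₁, R x = Acap C u S₁ (V₁ ∪ Vz) := by
      obtain ⟨h1, h2⟩ := htight₁
      have hle : Acap C u S₁ (V₁ ∪ Vz) ≤ Acap C u S₁ V₁ := by
        unfold Acap
        have hCpart : ∑ y ∈ (V₁ ∪ Vz), C y = ∑ y ∈ V₁, C y := by
          symm
          apply Finset.sum_subset Finset.subset_union_left
          intro y hy hyn
          rcases Finset.mem_union.mp hy with h | h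
          · exact absurd h hyn
          · exact (Finset.mem_filter.mp h).2
        have hupart : (∑ x ∈ S₁, ∑ y ∈ (V₁ ∪ Vz)ᶜ, u x y)
            ≤ ∑ x ∈ S₁, ∑ y ∈ V₁ᶜ, u x y := by
          apply Finset.sum_le_sum
          intro x _
          apply Finset.sum_le_sum_of_subset
          intro y hy
          simp only [Finset.mem_compl] at hy ⊢
          intro hc
          exact hy (Finset.mem_union_left _ hc)
        omega
      have hge := hcond S₁ (V₁ ∪ Vz)
      omega
    set V₂ := V₁ ∪ Vz with hV₂
    have hy0 : ∃ y₀, y₀ ∉ V₂ ∧ u x₀ y₀ ≠ 0 := by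
      by_contra h
      push_neg at h
      have hc := hcond (insert x₀ S₁) V₂
      have hxS₁ : x₀ ∉ S₁ := htight₁.1
      rw [Finset.sum_insert hxS₁] at hc
      have hA : Acap C u (insert x₀ S₁) V₂ = Acap C u S₁ V₂ := by
        unfold Acap
        rw [Finset.sum_insert hxS₁]
        have h0 : ∑ y ∈ V₂ᶜ, u x₀ y = 0 := by
          apply Finset.sum_eq_zero
          intro y hy
          exact h y (Finset.mem_compl.mp hy)
        omega
      rw [hA, ← htight₂] at hc
      omega
    obtain ⟨y₀, hy₀V, huy₀⟩ := hy0
    have hCy₀ : C y₀ ≠ 0 := by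
      intro h
      apply hy₀V
      apply Finset.mem_union_right
      rw [hVz]
      simp [h]
    have hstrict : ∀ S V, x₀ ∉ S → y₀ ∈ V → ∑ x ∈ S, R x + 1 ≤ Acap C u S V := by
      intro S V hxS hyV
      rcases Nat.lt_or_ge (∑ x ∈ S, R x) (Acap C u S V) with h | h
      · omega
      · exfalso
        have heq : ∑ x ∈ S, R x = Acap C u S V := le_antisymm (hcond S V) h
        have hmem : (S, V) ∈ TS := by
          rw [hTS, Finset.mem_filter]
          exact ⟨mem_univ _, hxS, heq⟩
        have hsub : V ⊆ V₁ := by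
          rw [hV₁]
          exact Finset.le_sup (f := Prod.snd) hmem
        exact hy₀V (Finset.mem_union_left _ (hsub hyV))
    set R' : ι → ℕ := fun x => R x - (if x = x₀ then 1 else 0) with hR'
    set C' : κ → ℕ := fun y => C y - (if y = y₀ then 1 else 0) with hC'
    set u' : ι → κ → ℕ := fun x y => u x y - (if x = x₀ ∧ y = y₀ then 1 else 0) with hu'
    have hRpt : ∀ x, R x = R' x + (if x = x₀ then 1 else 0) := by
      intro x
      by_cases h : x = x₀ <;> simp only [hR', h, if_true, if_false] <;> omega
    have hCpt : ∀ y, C y = C' y + (if y = y₀ then 1 else 0) := by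
      intro y
      by_cases h : y = y₀ <;> simp only [hC', h, if_true, if_false] <;> omega
    have hupt : ∀ x y, u x y = u' x y + (if x = x₀ ∧ y = y₀ then 1 else 0) := by
      intro x y
      by_cases h1 : x = x₀ <;> by_cases h2 : y = y₀ <;>
        simp only [hu', h1, h2, true_and, false_and, and_true, and_false, if_true, if_false] <;>
        omega
    have hRS : ∀ S : Finset ι, ∑ x ∈ S, R x = ∑ x ∈ S, R' x + (if x₀ ∈ S then 1 else 0) := by
      intro S
      calc ∑ x ∈ S, R x = ∑ x ∈ S, (R' x + (if x = x₀ then 1 else 0)) :=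
            Finset.sum_congr rfl (fun x _ => hRpt x)
        _ = ∑ x ∈ S, R' x + ∑ x ∈ S, (if x = x₀ then 1 else 0) := Finset.sum_add_distrib
        _ = ∑ x ∈ S, R' x + (if x₀ ∈ S then 1 else 0) := by rw [sum_ind_eq S x₀]
    have hCS : ∀ V : Finset κ, ∑ y ∈ V, C y = ∑ y ∈ V, C' y + (if y₀ ∈ V then 1 else 0) := by
      intro V
      calc ∑ y ∈ V, C y = ∑ y ∈ V, (C' y + (if y = y₀ then 1 else 0)) :=
            Finset.sum_congr rfl (fun y _ => hCpt y)
        _ = ∑ y ∈ V, C' y + ∑ y ∈ V, (if y = y₀ then 1 else 0) := Finset.sum_add_distrib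
        _ = ∑ y ∈ V, C' y + (if y₀ ∈ V then 1 else 0) := by rw [sum_ind_eq V y₀]
    have huS : ∀ (S : Finset ι) (W : Finset κ),
        ∑ x ∈ S, ∑ y ∈ W, u x y
          = ∑ x ∈ S, ∑ y ∈ W, u' x y + (if x₀ ∈ S ∧ y₀ ∈ W then 1 else 0) := by
      intro S W
      have hrow : ∀ x ∈ S, ∑ y ∈ W, u x y
          = ∑ y ∈ W, u' x y + (if x = x₀ ∧ y₀ ∈ W then 1 else 0) := by
        intro x _
        calc ∑ y ∈ W, u x y
            = ∑ y ∈ W, (u' x y + (if x = x₀ ∧ y = y₀ then 1 else 0)) :=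
              Finset.sum_congr rfl (fun y _ => hupt x y)
          _ = ∑ y ∈ W, u' x y + ∑ y ∈ W, (if x = x₀ ∧ y = y₀ then 1 else 0) :=
              Finset.sum_add_distrib
          _ = ∑ y ∈ W, u' x y + (if x = x₀ ∧ y₀ ∈ W then 1 else 0) := by
              by_cases h : x = x₀
              · simp only [h, true_and]
                rw [sum_ind_eq W y₀]
              · simp [h]
      calc ∑ x ∈ S, ∑ y ∈ W, u x y
          = ∑ x ∈ S, (∑ y ∈ W, u' x y + (if x = x₀ ∧ y₀ ∈ W then 1 else 0)) :=
            Finset.sum_congr rfl hrow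
        _ = ∑ x ∈ S, ∑ y ∈ W, u' x y + ∑ x ∈ S, (if x = x₀ ∧ y₀ ∈ W then 1 else 0) :=
            Finset.sum_add_distrib
        _ = ∑ x ∈ S, ∑ y ∈ W, u' x y + (if x₀ ∈ S ∧ y₀ ∈ W then 1 else 0) := by
            by_cases h : y₀ ∈ W
            · simp only [h, and_true]
              rw [sum_ind_eq S x₀]
            · simp [h]
    have hN' : ∑ x, R' x = N - 1 := by
      have h := hRS univ
      simp only [mem_univ, if_true] at h
      omega
    have htot' : ∑ x, R' x = ∑ y, C' y := by
      have h1 := hRS univ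
      have h2 := hCS univ
      simp only [mem_univ, if_true] at h1 h2
      omega
    have hcond' : ∀ S V, ∑ x ∈ S, R' x ≤ Acap C' u' S V := by
      intro S V
      have hB := hRS S
      have hCv := hCS V
      have hU := huS S Vᶜ
      have hbase := hcond S V
      unfold Acap at hbase ⊢
      by_cases hxS : x₀ ∈ S
      · simp only [hxS, true_and, if_true] at hB hU
        by_cases hyV : y₀ ∈ V
        · have hyVc : y₀ ∉ Vᶜ := by simp [hyV]
          simp only [hyV, hyVc, if_true, if_false] at hCv hU
          omega
        · have hyVc : y₀ ∈ Vᶜ := by simp [hyV]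
          simp only [hyV, hyVc, if_true, if_false] at hCv hU
          omega
      · simp only [hxS, false_and, if_false] at hB hU
        by_cases hyV : y₀ ∈ V
        · have hst := hstrict S V hxS hyV
          unfold Acap at hst
          simp only [hyV, if_true] at hCv
          omega
        · simp only [hyV, if_false] at hCv
          omega
    obtain ⟨X', hX'u, hX'row, hX'col⟩ := ih (N - 1) (by omega) R' C' u' hN' htot' hcond'
    refine ⟨fun x y => X' x y + (if x = x₀ ∧ y = y₀ then 1 else 0), ?_, ?_, ?_⟩
    · intro x y
      show X' x y + (if x = x₀ ∧ y = y₀ then 1 else 0) ≤ u x y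
      have h1 := hX'u x y
      have h2 := hupt x y
      omega
    · intro x
      rw [Finset.sum_add_distrib, hX'row]
      have hs : (∑ y : κ, if x = x₀ ∧ y = y₀ then (1:ℕ) else 0) = if x = x₀ then 1 else 0 := by
        by_cases h : x = x₀
        · simp only [h, true_and]
          rw [sum_ind_eq univ y₀]
          simp
        · simp [h]
      rw [hs]
      have h1 := hRpt x
      omega
    · intro y
      rw [Finset.sum_add_distrib, hX'col]
      have hs : (∑ x : ι, if x = x₀ ∧ y = y₀ then (1:ℕ) else 0) = if y = y₀ then 1 else 0 := by
        by_cases h : y = y₀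
        · simp only [h, and_true]
          rw [sum_ind_eq univ x₀]
          simp
        · simp [h]
      rw [hs]
      have h1 := hCpt y
      omega

theorem CT (R : ι → ℕ) (C : κ → ℕ) (u : ι → κ → ℕ)
    (htot : ∑ x, R x = ∑ y, C y)
    (hcond : ∀ (S : Finset ι) (V : Finset κ),
      ∑ x ∈ S, R x ≤ (∑ x ∈ S, ∑ y ∈ Vᶜ, u x y) + ∑ y ∈ V, C y) :
    ∃ X : ι → κ → ℕ, (∀ x y, X x y ≤ u x y) ∧ (∀ x, ∑ y, X x y = R x) ∧
      (∀ y, ∑ x, X x y = C y) :=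
  CTaux (∑ x, R x) R C u rfl htot hcond

end CT




lemma arith_col (k L s a b fcol : ℕ) (hs : s = a + b + (k+2)*fcol) (hsK : s ≤ (k+2)*L)
    (hf : fcol ≤ L) :
    (k+2)*((k+1)*(s - (k+1)*L - fcol)) ≤ (k+2)*a + (k+1)*b := by
  set c := s - (k+1)*L - fcol with hc
  rcases Nat.eq_zero_or_pos c with h0 | hpos
  · rw [h0]; simp
  · set Δ := L - fcol with hΔdef
    have e0 : Δ + fcol = L := by omega
    have e1 : (k+1)*L = (k+1)*Δ + (k+1)*fcol := by rw [← e0]; ring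
    have e2 : (k+2)*L = (k+2)*Δ + (k+2)*fcol := by rw [← e0]; ring
    have e3 : (k+2)*fcol = (k+1)*fcol + fcol := by ring
    have e4 : (k+2)*Δ = (k+1)*Δ + Δ := by ring
    have h1 : c + (k+1)*Δ = a + b := by omega
    have hcΔ : c ≤ Δ := by omega
    have g2 : (k+1)*((k+1)*c) ≤ (k+1)*((k+1)*Δ) :=
      Nat.mul_le_mul_left _ (Nat.mul_le_mul_left _ hcΔ)
    have g5 : (k+1)*c + (k+1)*((k+1)*Δ) = (k+1)*a + (k+1)*b := by
      calc (k+1)*c + (k+1)*((k+1)*Δ) = (k+1)*(c + (k+1)*Δ) := by ring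
        _ = (k+1)*(a+b) := by rw [h1]
        _ = (k+1)*a + (k+1)*b := by ring
    have goal_eq : (k+2)*((k+1)*c) = (k+1)*((k+1)*c) + (k+1)*c := by ring
    have ga : (k+2)*a = (k+1)*a + a := by ring
    omega

theorem STEP {ι κ : Type*} [Fintype ι] [Fintype κ] [DecidableEq ι] [DecidableEq κ]
    (K L : ℕ) (hK : 1 ≤ K) (D : ι → κ → ℕ)
    (ha : ∀ x, ∑ y, D x y = K * L)
    (hb : ∀ x y, D x y ≤ K)
    (hd : ∀ y, ∑ x, D x y ≤ K * L) :
    ∃ X : ι → κ → ℕ, (∀ x y, X x y ≤ 1) ∧ (∀ x y, X x y ≤ D x y) ∧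
      (∀ x y, D x y = K → X x y = 1) ∧
      (∀ x, ∑ y, X x y = L) ∧
      (∀ y, ∑ x, X x y ≤ L) ∧
      (∀ y, ∑ x, D x y ≤ ∑ x, X x y + (K - 1) * L) := by
  classical
  set s : κ → ℕ := fun y => ∑ x, D x y with hs
  set F : ι → κ → ℕ := fun x y => if D x y = K then 1 else 0 with hF
  set uind : ι → κ → ℕ := fun x y => if 0 < D x y ∧ D x y < K then 1 else 0 with huind
  set frow : ι → ℕ := fun x => ∑ y, F x y with hfrow
  set fcol : κ → ℕ := fun y => ∑ x, F x y with hfcol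
  have hF01 : ∀ x y, F x y ≤ 1 := by
    intro x y; by_cases h : D x y = K <;> simp [hF, h]
  have huind01 : ∀ x y, uind x y ≤ 1 := by
    intro x y; by_cases h : 0 < D x y ∧ D x y < K <;> simp [huind, h]
  have hKF : ∀ x y, K * F x y ≤ D x y := by
    intro x y; by_cases h : D x y = K <;> simp [hF, h]
  have hDsplit : ∀ x y, D x y ≤ K * F x y + (K-1) * uind x y := by
    intro x y
    have hbxy := hb x y
    by_cases h : D x y = K
    · simp [hF, h]
    · have h2 : (0 < D x y ∧ D x y < K) ∨ D x y = 0 := by omega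
      rcases h2 with h2 | h2
      · simp only [hF, huind, h, h2, if_false, if_true, and_self]
        omega
      · simp [hF, huind, h, h2]
  have hfrowK : ∀ x, K * frow x ≤ K * L := by
    intro x
    calc K * frow x = ∑ y, K * F x y := by rw [hfrow]; exact Finset.mul_sum _ _ _
      _ ≤ ∑ y, D x y := Finset.sum_le_sum (fun y _ => hKF x y)
      _ = K * L := ha x
  have hfrowL : ∀ x, frow x ≤ L := fun x => Nat.le_of_mul_le_mul_left (hfrowK x) hK
  have hfcolK : ∀ y, K * fcol y ≤ s y := by
    intro y
    calc K * fcol y = ∑ x, K * F x y := by rw [hfcol]; exact Finset.mul_sum _ _ _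
      _ ≤ ∑ x, D x y := Finset.sum_le_sum (fun x _ => hKF x y)
      _ = s y := rfl
  have hfcolL : ∀ y, fcol y ≤ L :=
    fun y => Nat.le_of_mul_le_mul_left (le_trans (hfcolK y) (hd y)) hK
  have hfcols : ∀ y, fcol y ≤ s y := by
    intro y
    have h1 : fcol y ≤ K * fcol y := Nat.le_mul_of_pos_left _ hK
    exact le_trans h1 (hfcolK y)
  set hi : κ → ℕ := fun y => min L (s y) - fcol y with hhi
  have hfcolmin : ∀ y, fcol y ≤ min L (s y) := fun y => le_min (hfcolL y) (hfcols y)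
  have hhiE : ∀ y, hi y + fcol y = min L (s y) := fun y => Nat.sub_add_cancel (hfcolmin y)
  have hsKmin : ∀ y, s y ≤ K * min L (s y) := by
    intro y
    rcases le_total (s y) L with h | h
    · rw [min_eq_right h]
      exact Nat.le_mul_of_pos_left _ hK
    · rw [min_eq_left h]
      exact hd y
  have hKLsplit : (K-1)*L + L = K*L := by
    have h : K - 1 + 1 = K := by omega
    calc (K-1)*L + L = ((K-1)+1)*L := by ring
      _ = K*L := by rw [h]
  set lo2 : κ → ℕ := fun y => s y - (K-1)*L with hlo2
  set lo' : κ → ℕ := fun y => lo2 y - fcol y with hlo'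
  have hlo2min : ∀ y, lo2 y ≤ min L (s y) := by
    intro y
    have h1 := hd y
    have h1' : s y = ∑ x, D x y := rfl
    apply le_min
    · show s y - (K-1)*L ≤ L
      omega
    · show s y - (K-1)*L ≤ s y
      omega
  have hlo'hi : ∀ y, lo' y ≤ hi y := by
    intro y
    exact Nat.sub_le_sub_right (hlo2min y) _
  set Pt : ι → ℕ := fun x => L - frow x with hPt
  have hPtE : ∀ x, Pt x + frow x = L := fun x => Nat.sub_add_cancel (hfrowL x)
  set Ptot := ∑ x, Pt x with hPtot
  set Htot := ∑ y, hi y with hHtot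
  have hswap : ∑ y, fcol y = ∑ x, frow x := by
    rw [hfcol, hfrow]
    exact Finset.sum_comm
  have hstot : ∑ y, s y = ∑ x : ι, K * L := by
    rw [hs]
    rw [Finset.sum_comm]
    exact Finset.sum_congr rfl (fun x _ => ha x)
  have hPH : Ptot ≤ Htot := by
    have h1 : K * Ptot + K * (∑ x, frow x) = ∑ y, s y := by
      rw [hstot, hPtot, Finset.mul_sum, Finset.mul_sum, ← Finset.sum_add_distrib]
      apply Finset.sum_congr rfl
      intro x _
      have := hPtE x
      calc K * Pt x + K * frow x = K * (Pt x + frow x) := by ring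
        _ = K * L := by rw [this]
    have h2 : ∑ y, s y ≤ K * Htot + K * (∑ y, fcol y) := by
      rw [hHtot, Finset.mul_sum, Finset.mul_sum, ← Finset.sum_add_distrib]
      apply Finset.sum_le_sum
      intro y _
      have h3 := hsKmin y
      have h4 : K * (hi y + fcol y) = K * min L (s y) := by rw [hhiE y]
      have h5 : K * (hi y + fcol y) = K * hi y + K * fcol y := by ring
      omega
    rw [hswap] at h2
    have h6 : K * Ptot ≤ K * Htot := by omega
    exact Nat.le_of_mul_le_mul_left h6 hK
  -- the CT instance
  set R : Option ι → ℕ := fun z => match z with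
    | none => Htot - Ptot
    | some x => Pt x
    with hR
  set uu : Option ι → κ → ℕ := fun z y => match z with
    | none => hi y - lo' y
    | some x => uind x y
    with huu
  have htotCT : ∑ z : Option ι, R z = ∑ y, hi y := by
    rw [Fintype.sum_option]
    have h1 : R none = Htot - Ptot := rfl
    have h2 : ∑ x : ι, R (some x) = Ptot := rfl
    rw [h1, h2]
    omega
  have hcondCT : ∀ (S' : Finset (Option ι)) (V : Finset κ),
      ∑ z ∈ S', R z ≤ (∑ z ∈ S', ∑ y ∈ Vᶜ, uu z y) + ∑ y ∈ V, hi y := by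
    intro S' V
    set S : Finset ι := univ.filter (fun x => some x ∈ S') with hSdef
    have hsplit : ∀ g : Option ι → ℕ,
        ∑ z ∈ S', g z = (if none ∈ S' then g none else 0) + ∑ x ∈ S, g (some x) := by
      intro g
      rw [sum_indicator' S', Fintype.sum_option]
      congr 1
      rw [sum_indicator' S]
      apply Finset.sum_congr rfl
      intro x _
      simp [hSdef]
    set e := ∑ x ∈ S, ∑ y ∈ Vᶜ, uind x y with he
    set HV := ∑ y ∈ V, hi y with hHV
    set HVc := ∑ y ∈ Vᶜ, hi y with hHVc
    set PtS := ∑ x ∈ S, Pt x with hPtS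
    set PtSc := ∑ x ∈ Sᶜ, Pt x with hPtSc
    set LoVc := ∑ y ∈ Vᶜ, lo' y with hLoVc
    -- claim 1
    have claim1 : PtS ≤ e + HV := by
      set A1 := ∑ x ∈ S, ∑ y ∈ Vᶜ, F x y with hA1
      set A2 := ∑ y ∈ V, ∑ x ∈ S, F x y with hA2
      have hA : ∑ x ∈ S, ∑ y ∈ Vᶜ, D x y ≤ K * A1 + (K-1) * e := by
        rw [hA1, he, Finset.mul_sum, Finset.mul_sum, ← Finset.sum_add_distrib]
        apply Finset.sum_le_sum
        intro x _
        rw [Finset.mul_sum, Finset.mul_sum, ← Finset.sum_add_distrib]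
        apply Finset.sum_le_sum
        intro y _
        exact hDsplit x y
      have hB : ∀ y, ∑ x ∈ S, D x y ≤ K * (∑ x ∈ S, F x y) + K * hi y := by
        intro y
        have h1 : ∑ x ∈ S, D x y + ∑ x ∈ Sᶜ, D x y = s y := by
          rw [hs]; exact Finset.sum_add_sum_compl S _
        have h2 : ∑ x ∈ Sᶜ, K * F x y ≤ ∑ x ∈ Sᶜ, D x y :=
          Finset.sum_le_sum (fun x _ => hKF x y)
        have h3 : ∑ x ∈ S, F x y + ∑ x ∈ Sᶜ, F x y = fcol y := by
          rw [hfcol]; exact Finset.sum_add_sum_compl S _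
        have h4 := hsKmin y
        have h5 : K * min L (s y) = K * hi y + K * fcol y := by
          rw [← hhiE y]; ring
        have h6 : K * fcol y = K * (∑ x ∈ S, F x y) + K * (∑ x ∈ Sᶜ, F x y) := by
          rw [← h3]; ring
        have h7 : ∑ x ∈ Sᶜ, K * F x y = K * (∑ x ∈ Sᶜ, F x y) := by
          rw [Finset.mul_sum]
        omega
      have hKLS : ∑ x ∈ S, (K*L) = ∑ x ∈ S, ∑ y ∈ Vᶜ, D x y + ∑ x ∈ S, ∑ y ∈ V, D x y := by
        rw [← Finset.sum_add_distrib]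
        apply Finset.sum_congr rfl
        intro x _
        have h := Finset.sum_add_sum_compl V (D x)
        rw [← ha x]
        omega
      have hBsum : ∑ x ∈ S, ∑ y ∈ V, D x y ≤ K * A2 + K * HV := by
        rw [Finset.sum_comm, hA2, hHV, Finset.mul_sum, Finset.mul_sum, ← Finset.sum_add_distrib]
        apply Finset.sum_le_sum
        intro y _
        exact hB y
      have hfSsplit : ∑ x ∈ S, frow x = A1 + A2 := by
        rw [hA1, hA2]
        have h1 : ∀ x ∈ S, frow x = ∑ y ∈ Vᶜ, F x y + ∑ y ∈ V, F x y := by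
          intro x _
          have h0 : ∑ y ∈ V, F x y + ∑ y ∈ Vᶜ, F x y = frow x :=
            Finset.sum_add_sum_compl V (F x)
          omega
        rw [Finset.sum_congr rfl h1, Finset.sum_add_distrib]
        congr 1
        exact Finset.sum_comm
      have hPtSE : K * PtS + K * (∑ x ∈ S, frow x) = ∑ x ∈ S, (K * L) := by
        rw [hPtS, Finset.mul_sum, Finset.mul_sum, ← Finset.sum_add_distrib]
        apply Finset.sum_congr rfl
        intro x _
        have := hPtE x
        calc K * Pt x + K * frow x = K * (Pt x + frow x) := by ring
          _ = K * L := by rw [this]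
      have hfrowbr : K * (∑ x ∈ S, frow x) = K * A1 + K * A2 := by
        rw [hfSsplit]; ring
      have hb1 : (K-1)*e + e = K * e := by
        have h : K - 1 + 1 = K := by omega
        calc (K-1)*e + e = ((K-1)+1)*e := by ring
          _ = K*e := by rw [h]
      have hb2 : K * (e + HV) = K*e + K*HV := by ring
      have hfin : K * PtS ≤ K * (e + HV) := by omega
      exact Nat.le_of_mul_le_mul_left hfin hK
    -- claim 2
    have claim2 : LoVc ≤ e + PtSc := by
      rcases Nat.lt_or_ge K 2 with hK2 | hK2
      · -- K = 1
        have hK1 : K = 1 := by omega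
        have hlz : ∀ y, lo' y = 0 := by
          intro y
          have hFD : ∀ x, F x y = D x y := by
            intro x
            have := hb x y
            by_cases h : D x y = K <;> simp [hF, h] <;> omega
          have hfs : fcol y = s y := by
            rw [hfcol, hs]
            exact Finset.sum_congr rfl (fun x _ => hFD x)
          show lo2 y - fcol y = 0
          have : lo2 y ≤ s y := by
            show s y - (K-1)*L ≤ s y
            omega
          omega
        have : LoVc = 0 := by
          rw [hLoVc]
          exact Finset.sum_eq_zero (fun y _ => hlz y)
        omega
      · obtain ⟨k, rfl⟩ : ∃ k, K = k + 2 := ⟨K - 2, by omega⟩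
        have hred : k + 2 - 1 = k + 1 := rfl
        simp only [hred] at hDsplit
        set aY : κ → ℕ := fun y => ∑ x ∈ S, (D x y - (k+2) * F x y) with haY
        set bY : κ → ℕ := fun y => ∑ x ∈ Sᶜ, (D x y - (k+2) * F x y) with hbY
        set gS : κ → ℕ := fun y => ∑ x ∈ S, uind x y with hgS
        have hkey : ∀ y, (k+2)*((k+1)* lo' y) ≤ (k+2)*((k+1)* gS y) + (k+1)* bY y := by
          intro y
          have hsum : s y = aY y + bY y + (k+2) * fcol y := by
            have h1 : ∀ (T : Finset ι), ∑ x ∈ T, D x y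
                = ∑ x ∈ T, (D x y - (k+2)*F x y) + ∑ x ∈ T, (k+2)*F x y := by
              intro T
              rw [← Finset.sum_add_distrib]
              apply Finset.sum_congr rfl
              intro x _
              have := hKF x y
              omega
            have h2 : ∑ x ∈ S, D x y + ∑ x ∈ Sᶜ, D x y = s y := by
              rw [hs]; exact Finset.sum_add_sum_compl S _
            have h3 : ∑ x ∈ S, (k+2)*F x y + ∑ x ∈ Sᶜ, (k+2)*F x y = (k+2) * fcol y := by
              rw [hfcol, Finset.mul_sum]
              exact Finset.sum_add_sum_compl S _
            have h4 := h1 S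
            have h5 := h1 Sᶜ
            have hva : aY y = ∑ x ∈ S, (D x y - (k+2)*F x y) := rfl
            have hvb : bY y = ∑ x ∈ Sᶜ, (D x y - (k+2)*F x y) := rfl
            omega
          have harith := arith_col k L (s y) (aY y) (bY y) (fcol y) hsum (hd y) (hfcolL y)
          have hlo'eq : lo' y = s y - (k+1)*L - fcol y := by
            show lo2 y - fcol y = _
            have : lo2 y = s y - (k+1)*L := rfl
            omega
          rw [hlo'eq]
          have hagS : aY y ≤ (k+1) * gS y := by
            rw [haY, hgS, Finset.mul_sum]
            apply Finset.sum_le_sum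
            intro x _
            have h1 := hDsplit x y
            have h2 := hKF x y
            omega
          have h6 : (k+2)*aY y ≤ (k+2)*((k+1)*gS y) := Nat.mul_le_mul_left _ hagS
          omega
        have hsum1 : (k+2)*((k+1)* LoVc) ≤ (k+2)*((k+1)* (∑ y ∈ Vᶜ, gS y)) + (k+1)* (∑ y ∈ Vᶜ, bY y) := by
          have h1 : ∑ y ∈ Vᶜ, ((k+2)*((k+1)* lo' y)) ≤
              ∑ y ∈ Vᶜ, ((k+2)*((k+1)* gS y) + (k+1)* bY y) :=
            Finset.sum_le_sum (fun y _ => hkey y)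
          rw [Finset.sum_add_distrib] at h1
          have h2 : ∑ y ∈ Vᶜ, ((k+2)*((k+1)* lo' y)) = (k+2)*((k+1)* LoVc) := by
            rw [hLoVc, Finset.mul_sum, Finset.mul_sum]
          have h3 : ∑ y ∈ Vᶜ, ((k+2)*((k+1)* gS y)) = (k+2)*((k+1)* (∑ y ∈ Vᶜ, gS y)) := by
            rw [Finset.mul_sum, Finset.mul_sum]
          have h4 : ∑ y ∈ Vᶜ, ((k+1)* bY y) = (k+1)* (∑ y ∈ Vᶜ, bY y) := by
            rw [Finset.mul_sum]
          omega
        have hge : ∑ y ∈ Vᶜ, gS y = e := by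
          rw [hgS, he]
          exact Finset.sum_comm
        have hbtot : ∑ y ∈ Vᶜ, bY y ≤ (k+2) * PtSc := by
          have h1 : ∑ y ∈ Vᶜ, bY y ≤ ∑ y : κ, bY y := by
            apply Finset.sum_le_sum_of_subset (Finset.subset_univ _)
          have h2 : ∑ y : κ, bY y = ∑ x ∈ Sᶜ, ∑ y : κ, (D x y - (k+2)*F x y) := by
            rw [hbY]
            exact Finset.sum_comm
          have h3 : ∀ x, ∑ y : κ, (D x y - (k+2)*F x y) = (k+2) * Pt x := by
            intro x
            have h4 : ∑ y : κ, (D x y - (k+2)*F x y) + ∑ y : κ, (k+2)*F x y = ∑ y, D x y := by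
              rw [← Finset.sum_add_distrib]
              apply Finset.sum_congr rfl
              intro y _
              have := hKF x y
              omega
            have h5 : ∑ y : κ, (k+2)*F x y = (k+2) * frow x := by
              rw [hfrow, Finset.mul_sum]
            have h6 : (k+2) * Pt x + (k+2) * frow x = (k+2) * L := by
              have := hPtE x
              calc (k+2) * Pt x + (k+2) * frow x = (k+2) * (Pt x + frow x) := by ring
                _ = (k+2) * L := by rw [this]
            have h7 := ha x
            omega
          have h8 : ∑ x ∈ Sᶜ, ∑ y : κ, (D x y - (k+2)*F x y) = (k+2) * PtSc := by
            rw [hPtSc, Finset.mul_sum]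
            exact Finset.sum_congr rfl (fun x _ => h3 x)
          omega
        have hbr1 : (k+1)*((k+2)*PtSc) = (k+2)*((k+1)*PtSc) := by ring
        have hbr2 : (k+2)*((k+1)*(e + PtSc)) = (k+2)*((k+1)*e) + (k+2)*((k+1)*PtSc) := by ring
        have hfin : (k+2)*((k+1)*LoVc) ≤ (k+2)*((k+1)*(e + PtSc)):= by
          have h9 : (k+1) * (∑ y ∈ Vᶜ, bY y) ≤ (k+1)*((k+2)*PtSc) :=
            Nat.mul_le_mul_left _ hbtot
          rw [hge] at hsum1
          omega
        have hfin2 := Nat.le_of_mul_le_mul_left hfin (by omega : 0 < k+2)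
        exact Nat.le_of_mul_le_mul_left hfin2 (by omega : 0 < k+1)
    -- assemble condition
    rw [hsplit R, hsplit (fun z => ∑ y ∈ Vᶜ, uu z y)]
    have huS : ∑ x ∈ S, ∑ y ∈ Vᶜ, uu (some x) y = e := by
      rw [he]
    by_cases hnone : none ∈ S'
    · simp only [hnone, if_true]
      have h1 : R none = Htot - Ptot := rfl
      have h2 : ∑ x ∈ S, R (some x) = PtS := rfl
      have h3 : ∑ y ∈ Vᶜ, uu none y = HVc - LoVc := by
        rw [hHVc, hLoVc, ← Finset.sum_tsub_distrib _ (fun y (_ : y ∈ Vᶜ) => hlo'hi y)]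
      rw [h1, h2, h3, huS]
      have h4 : HV + HVc = Htot := by
        rw [hHV, hHVc, hHtot]
        exact Finset.sum_add_sum_compl V _
      have h5 : PtS + PtSc = Ptot := by
        rw [hPtS, hPtSc, hPtot]
        exact Finset.sum_add_sum_compl S _
      have h6 : LoVc ≤ HVc := by
        rw [hLoVc, hHVc]
        exact Finset.sum_le_sum (fun y _ => hlo'hi y)
      omega
    · simp only [hnone, if_false]
      have h2 : ∑ x ∈ S, R (some x) = PtS := rfl
      rw [h2, huS]
      omega
  obtain ⟨XC, hXCu, hXCrow, hXCcol⟩ := CT R hi uu htotCT hcondCT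
  refine ⟨fun x y => XC (some x) y + F x y, ?_, ?_, ?_, ?_, ?_, ?_⟩
  · intro x y
    show XC (some x) y + F x y ≤ 1
    have h1 : XC (some x) y ≤ uind x y := hXCu (some x) y
    have h2 := huind01 x y
    have h3 := hF01 x y
    by_cases h : D x y = K
    · have h4 : uind x y = 0 := by simp [huind, h]
      have h5 : F x y = 1 := by simp [hF, h]
      omega
    · have h5 : F x y = 0 := by simp [hF, h]
      omega
  · intro x y
    show XC (some x) y + F x y ≤ D x y
    have h1 : XC (some x) y ≤ uind x y := hXCu (some x) y
    by_cases h : D x y = K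
    · have h4 : uind x y = 0 := by simp [huind, h]
      have h5 : F x y = 1 := by simp [hF, h]
      omega
    · have h5 : F x y = 0 := by simp [hF, h]
      by_cases h6 : 0 < D x y ∧ D x y < K
      · have : uind x y = 1 := by simp [huind, h6]
        omega
      · have : uind x y = 0 := by simp [huind, h6]
        omega
  · intro x y hD
    show XC (some x) y + F x y = 1
    have h1 : XC (some x) y ≤ uind x y := hXCu (some x) y
    have h4 : uind x y = 0 := by simp [huind, hD]
    have h5 : F x y = 1 := by simp [hF, hD]
    omega
  · intro x
    show ∑ y, (XC (some x) y + F x y) = L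
    rw [Finset.sum_add_distrib]
    have h1 : ∑ y, XC (some x) y = Pt x := hXCrow (some x)
    have h2 : ∑ y, F x y = frow x := rfl
    rw [h1, h2]
    exact hPtE x
  · intro y
    show ∑ x, (XC (some x) y + F x y) ≤ L
    rw [Finset.sum_add_distrib]
    have h1 : XC none y + ∑ x, XC (some x) y = hi y := by
      rw [← hXCcol y, Fintype.sum_option]
    have h2 : ∑ x, F x y = fcol y := rfl
    rw [h2]
    have h3 := hhiE y
    have h4 : min L (s y) ≤ L := min_le_left _ _
    omega
  · intro y
    show ∑ x, D x y ≤ ∑ x, (XC (some x) y + F x y) + (K-1)*L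
    rw [Finset.sum_add_distrib]
    have h1 : XC none y + ∑ x, XC (some x) y = hi y := by
      rw [← hXCcol y, Fintype.sum_option]
    have h2 : ∑ x, F x y = fcol y := rfl
    rw [h2]
    have h3' : XC none y + lo' y ≤ hi y := by
      have h3 : XC none y ≤ hi y - lo' y := hXCu none y
      have h10 := hlo'hi y
      omega
    have h4 : lo' y = lo2 y - fcol y := rfl
    have h5 : lo2 y = s y - (K-1)*L := rfl
    have h6 : ∑ x, D x y = s y := rfl
    omega

theorem FOLD {ι κ : Type*} [Fintype ι] [Fintype κ] [DecidableEq ι] [DecidableEq κ] (L : ℕ) :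
    ∀ (K : ℕ) (D : ι → κ → ℕ),
      (∀ x, ∑ y, D x y = K * L) → (∀ x y, D x y ≤ K) → (∀ y, ∑ x, D x y ≤ K * L) →
      ∃ Y : Fin K → ι → κ → ℕ,
        (∀ k x y, Y k x y ≤ 1) ∧
        (∀ k x, ∑ y, Y k x y = L) ∧
        (∀ x y, ∑ k, Y k x y = D x y) ∧
        (∀ k y, ∑ x, Y k x y ≤ L) := by
  intro K
  induction K with
  | zero =>
    intro D ha hb hd
    refine ⟨fun k => k.elim0, fun k => k.elim0, fun k => k.elim0, ?_, fun k => k.elim0⟩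
    intro x y
    have h1 := hb x y
    have h2 : ∑ k : Fin 0, (fun k : Fin 0 => k.elim0 (α := ι → κ → ℕ)) k x y = 0 := by simp
    simp only [Finset.univ_eq_empty, Finset.sum_empty]
    omega
  | succ K ihK =>
    intro D ha hb hd
    obtain ⟨X, hX1, hX2, hX3, hX4, hX5, hX6⟩ :=
      STEP (K+1) L (by omega) D ha hb hd
    set D' : ι → κ → ℕ := fun x y => D x y - X x y with hD'
    have ha' : ∀ x, ∑ y, D' x y = K * L := by
      intro x
      have h1 : ∑ y, D' x y + ∑ y, X x y = ∑ y, D x y := by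
        rw [← Finset.sum_add_distrib]
        apply Finset.sum_congr rfl
        intro y _
        have := hX2 x y
        show D x y - X x y + X x y = D x y
        omega
      have h2 := ha x
      have h3 := hX4 x
      have h4 : (K+1)*L = K*L + L := by ring
      omega
    have hb' : ∀ x y, D' x y ≤ K := by
      intro x y
      show D x y - X x y ≤ K
      have h1 := hb x y
      by_cases h : D x y = K + 1
      · have := hX3 x y h
        omega
      · omega
    have hd' : ∀ y, ∑ x, D' x y ≤ K * L := by
      intro y
      have h1 : ∑ x, D' x y + ∑ x, X x y = ∑ x, D x y := by
        rw [← Finset.sum_add_distrib]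
        apply Finset.sum_congr rfl
        intro x _
        have := hX2 x y
        show D x y - X x y + X x y = D x y
        omega
      have h2 := hX6 y
      have h3 : (K+1) - 1 = K := by omega
      rw [h3] at h2
      omega
    obtain ⟨Y', hY1, hY2, hY3, hY4⟩ := ihK D' ha' hb' hd'
    refine ⟨Fin.cons X Y', ?_, ?_, ?_, ?_⟩
    · intro k
      refine Fin.cases ?_ ?_ k
      · simpa using hX1
      · intro i
        simpa using hY1 i
    · intro k
      refine Fin.cases ?_ ?_ k
      · simpa using hX4
      · intro i
        simpa using hY2 i
    · intro x y
      rw [Fin.sum_univ_succ]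
      simp only [Fin.cons_zero, Fin.cons_succ]
      rw [hY3 x y]
      have := hX2 x y
      show X x y + (D x y - X x y) = D x y
      omega
    · intro k
      refine Fin.cases ?_ ?_ k
      · simpa using hX5
      · intro i
        simpa using hY4 i


lemma modinv (r t t' b : ℕ) (hb : b < r) (h : (t + t') % r = 0) :
    ((b + t) % r + t') % r = b := by
  rw [Nat.mod_add_mod]
  have h2 : (b + t + t') % r = b % r := by
    have h3 : b + t + t' = b + (t + t') := by ring
    rw [h3, Nat.add_mod, h, Nat.add_zero, Nat.mod_mod_of_dvd b dvd_rfl]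
  rw [h2]
  exact Nat.mod_eq_of_lt hb

lemma tshift (r t : ℕ) (hr : 0 < r) : (t + (r - t % r)) % r = 0 := by
  have h1 := Nat.mod_add_div t r
  have h2 : t % r < r := Nat.mod_lt _ hr
  have h3 : t + (r - t % r) = r * (t / r) + r * 1 := by omega
  rw [h3, ← Nat.mul_add, Nat.mul_mod_right]

lemma tshift' (r t : ℕ) (hr : 0 < r) : ((r - t % r) + t) % r = 0 := by
  rw [Nat.add_comm]; exact tshift r t hr

lemma count_shift (r t d : ℕ) (hr : 0 < r) (hd : d ≤ r) :
    ((range r).filter (fun c => (c + t) % r < d)).card = d := by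
  have key : ((range r).filter (fun c => (c + t) % r < d)).card = (range d).card := by
    apply Finset.card_bij' (i := fun c _ => (c + t) % r)
      (j := fun b _ => (b + (r - t % r)) % r)
    · intro c hc
      rw [Finset.mem_filter] at hc
      exact Finset.mem_range.mpr hc.2
    · intro b hb
      rw [Finset.mem_range] at hb
      rw [Finset.mem_filter]
      refine ⟨Finset.mem_range.mpr (Nat.mod_lt _ hr), ?_⟩
      rw [modinv r (r - t % r) t b (by omega) (tshift' r t hr)]
      omega
    · intro c hc
      rw [Finset.mem_filter, Finset.mem_range] at hc
      exact modinv r t (r - t % r) c hc.1 (tshift r t hr)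
    · intro b hb
      rw [Finset.mem_range] at hb
      exact modinv r (r - t % r) t b (by omega) (tshift' r t hr)
  rw [key, Finset.card_range]

lemma count_inj_le (r L t : ℕ) (hrt : r ≤ t) (d : ℕ → ℕ) (hd : ∀ j, j < r → d j ≤ L) :
    ((range r).filter (fun j => (t - j) % r < d j)).card ≤ L := by
  rcases Nat.eq_zero_or_pos r with hr0 | hr0
  · subst hr0
    simp
  · rw [← Finset.card_range L]
    apply Finset.card_le_card_of_injOn (fun j => (t - j) % r)
    · intro j hj
      rw [Finset.mem_coe, Finset.mem_filter, Finset.mem_range] at hj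
      rw [Finset.mem_coe, Finset.mem_range]
      exact lt_of_lt_of_le hj.2 (hd j hj.1)
    · intro j1 hj1 j2 hj2 heq
      simp only [Finset.coe_filter, Set.mem_setOf_eq, Finset.mem_range] at hj1 hj2
      have key : ∀ a b : ℕ, a < r → b < r → a ≤ b → (t - a) % r = (t - b) % r → a = b := by
        intro a b ha hb hab hmod
        have h1 : t - a ≥ t - b := by omega
        have h2 : (t - a) ≡ (t - b) [MOD r] := hmod
        have h3 : r ∣ (t - a) - (t - b) := (Nat.modEq_iff_dvd' (by omega)).mp h2.symm
        have h4 : (t - a) - (t - b) = b - a := by omega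
        rw [h4] at h3
        rcases Nat.eq_zero_or_pos (b - a) with h5 | h5
        · omega
        · have h6 := Nat.le_of_dvd h5 h3
          omega
      rcases le_total j1 j2 with h | h
      · exact key j1 j2 hj1.1 hj2.1 h heq
      · exact (key j2 j1 hj2.1 hj1.1 h heq.symm).symm


lemma sum_range_dite (r : ℕ) (g : Fin r → ℕ) :
    ∑ x ∈ range r, (if h : x < r then g ⟨x, h⟩ else 0) = ∑ x : Fin r, g x := by
  rw [← Fin.sum_univ_eq_sum_range (fun x => if h : x < r then g ⟨x, h⟩ else 0) r]
  apply Finset.sum_congr rfl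
  intro x _
  rw [dif_pos x.isLt]

lemma sum_ite_card (s : Finset ℕ) (p : ℕ → Prop) [DecidablePred p] :
    ∑ x ∈ s, (if p x then (1:ℕ) else 0) = (s.filter p).card := by
  rw [Finset.card_filter]

lemma all_eq_of_sum_eq {m L : ℕ} (f : Fin m → ℕ) (hle : ∀ k, f k ≤ L)
    (hsum : ∑ k, f k = m * L) : ∀ k, f k = L := by
  intro k
  by_contra h
  have hlt : f k < L := lt_of_le_of_ne (hle k) h
  have h2 : ∑ k : Fin m, f k < ∑ _k : Fin m, L :=
    Finset.sum_lt_sum (fun i _ => hle i) ⟨k, mem_univ k, hlt⟩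
  rw [Finset.sum_const, Finset.card_univ, Fintype.card_fin, smul_eq_mul] at h2
  omega

lemma split_at (n r : ℕ) (hrn : r ≤ n) (f : ℕ → ℕ) :
    ∑ v ∈ range n, f v = ∑ v ∈ range r, f v + ∑ k ∈ range (n - r), f (r + k) := by
  rw [← Finset.sum_range_add_sum_Ico f hrn, Finset.sum_Ico_eq_sum_range]

theorem stmt7 (r n L : ℕ) (hL : 1 ≤ L) (hrL : L ≤ r) (hn : 2 * r ≤ n)
    (M : Fin r → Fin r → Fin r → ℕ)
    (hMcell : ∀ i j, ∑ ℓ, M i j ℓ ≤ L)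
    (hMrow : ∀ i ℓ, ∑ j, M i j ℓ ≤ L)
    (hMcol : ∀ j ℓ, ∑ i, M i j ℓ ≤ L)
    (hMsimple : ∀ i j ℓ, M i j ℓ ≤ 1) :
    ∃ N : Fin n → Fin n → Fin n → ℕ,
      (∀ i j, ∑ ℓ, N i j ℓ = L) ∧
      (∀ i ℓ, ∑ j, N i j ℓ = L) ∧
      (∀ j ℓ, ∑ i, N i j ℓ = L) ∧
      (∀ i j ℓ, N i j ℓ ≤ 1) ∧
      (∀ i j ℓ, M i j ℓ ≤
        N (Fin.castLE (by omega) i) (Fin.castLE (by omega) j) (Fin.castLE (by omega) ℓ)) := by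
  classical
  have hr0 : 0 < r := by omega
  have hn0 : 0 < n := by omega
  have hrn : r ≤ n := by omega
  have h2rn : 2*r ≤ n := hn
  have hLnr : L ≤ n - r := by omega
  have hK0 : 1 ≤ n - r := by omega
  -- ℕ-indexed data
  set Mn : ℕ → ℕ → ℕ → ℕ := fun i j l =>
    if h : i < r ∧ j < r ∧ l < r then M ⟨i, h.1⟩ ⟨j, h.2.1⟩ ⟨l, h.2.2⟩ else 0 with hMn
  set mcell : ℕ → ℕ → ℕ := fun i j => ∑ l ∈ range r, Mn i j l with hmcelldef
  set dd : ℕ → ℕ → ℕ := fun i j => L - mcell i j with hdd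
  set fill : ℕ → ℕ → ℕ → ℕ := fun i j l =>
    if r ≤ l ∧ l < 2*r ∧ ((l - r) + (2*r - i - j)) % r < dd i j then 1 else 0 with hfill
  set TL : ℕ → ℕ → ℕ → ℕ := fun i j l => Mn i j l + fill i j l with hTLdef
  -- basic bounds
  have hMn1 : ∀ i j l, Mn i j l ≤ 1 := by
    intro i j l
    simp only [hMn]
    by_cases h : i < r ∧ j < r ∧ l < r
    · rw [dif_pos h]; exact hMsimple _ _ _
    · rw [dif_neg h]
      omega
  have hMn0 : ∀ i j l, ¬(i < r ∧ j < r ∧ l < r) → Mn i j l = 0 := by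
    intro i j l h
    simp only [hMn]
    rw [dif_neg h]
  have hfill1 : ∀ i j l, fill i j l ≤ 1 := by
    intro i j l
    simp only [hfill]
    split <;> omega
  have hfill0 : ∀ i j l, (l < r ∨ 2*r ≤ l) → fill i j l = 0 := by
    intro i j l h
    simp only [hfill]
    rw [if_neg]
    rintro ⟨h1, h2, _⟩
    omega
  have hmcellL : ∀ i j : Fin r, mcell i.val j.val ≤ L := by
    intro i j
    have hconv : mcell i.val j.val = ∑ l : Fin r, M i j l := by
      simp only [hmcelldef]
      have h1 : ∀ l ∈ range r, Mn i.val j.val l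
          = (if h : l < r then M i j ⟨l, h⟩ else 0) := by
        intro l hl
        rw [Finset.mem_range] at hl
        simp only [hMn]
        rw [dif_pos ⟨i.isLt, j.isLt, hl⟩, dif_pos hl]
      rw [Finset.sum_congr rfl h1, sum_range_dite r (fun l => M i j l)]
    rw [hconv]
    exact hMcell i j
  have hddL : ∀ i j, dd i j ≤ L := by
    intro i j
    simp only [hdd]
    omega
  have hTL1 : ∀ i j l, TL i j l ≤ 1 := by
    intro i j l
    have h1 := hMn1 i j l
    have h2 := hfill1 i j l
    rcases Nat.lt_or_ge l r with h | h
    · have := hfill0 i j l (Or.inl h)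
      simp only [hTLdef]
      omega
    · have : Mn i j l = 0 := hMn0 i j l (by omega)
      simp only [hTLdef]
      omega
  -- C1 : corner cell sums
  have hC1 : ∀ i j : Fin r, ∑ l ∈ range n, TL i.val j.val l = L := by
    intro i j
    have hMns : ∑ l ∈ range n, Mn i.val j.val l = mcell i.val j.val := by
      rw [split_at n r hrn]
      have h2 : ∑ k ∈ range (n-r), Mn i.val j.val (r + k) = 0 := by
        apply Finset.sum_eq_zero
        intro k _
        exact hMn0 _ _ _ (by omega)
      rw [h2]
      simp only [hmcelldef]
      omega
    have hfs : ∑ l ∈ range n, fill i.val j.val l = dd i.val j.val := by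
      rw [split_at n (2*r) (by omega)]
      have h3 : ∑ k ∈ range (n - 2*r), fill i.val j.val (2*r + k) = 0 := by
        apply Finset.sum_eq_zero
        intro k _
        exact hfill0 _ _ _ (by omega)
      rw [h3, add_zero, split_at (2*r) r (by omega)]
      have h4 : ∑ l ∈ range r, fill i.val j.val l = 0 := by
        apply Finset.sum_eq_zero
        intro l hl
        rw [Finset.mem_range] at hl
        exact hfill0 _ _ _ (by omega)
      rw [h4, show 2*r - r = r from by omega, zero_add]
      have h5 : ∀ k ∈ range r, fill i.val j.val (r + k)
          = (if (k + (2*r - i.val - j.val)) % r < dd i.val j.val then 1 else 0) := by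
        intro k hk
        rw [Finset.mem_range] at hk
        simp only [hfill]
        have h6 : r + k - r = k := by omega
        by_cases hP : (k + (2*r - i.val - j.val)) % r < dd i.val j.val
        · rw [if_pos hP, if_pos ⟨by omega, by omega, by rw [h6]; exact hP⟩]
        · rw [if_neg hP, if_neg]
          rintro ⟨_, _, hcon⟩
          rw [h6] at hcon
          exact hP hcon
      rw [Finset.sum_congr rfl h5, sum_ite_card,
        count_shift r (2*r - i.val - j.val) (dd i.val j.val) hr0 (le_trans (hddL _ _) hrL)]
    have hm := hmcellL i j
    have hdL : mcell i.val j.val + dd i.val j.val = L := by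
      simp only [hdd]
      omega
    calc ∑ l ∈ range n, TL i.val j.val l
        = ∑ l ∈ range n, Mn i.val j.val l + ∑ l ∈ range n, fill i.val j.val l := by
          simp only [hTLdef]
          rw [← Finset.sum_add_distrib]
      _ = L := by rw [hMns, hfs, hdL]
  -- C2 : corner row-symbol counts
  have hC2 : ∀ (i : Fin r) (l : ℕ), ∑ j ∈ range r, TL i.val j l ≤ L := by
    intro i l
    have hsplitTL : ∑ j ∈ range r, TL i.val j l
        = ∑ j ∈ range r, Mn i.val j l + ∑ j ∈ range r, fill i.val j l := by
      simp only [hTLdef]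
      rw [← Finset.sum_add_distrib]
    rcases Nat.lt_or_ge l r with hl | hl
    · -- old symbols: fill vanishes
      have h1 : ∑ j ∈ range r, fill i.val j l = 0 :=
        Finset.sum_eq_zero (fun j _ => hfill0 _ _ _ (Or.inl hl))
      have h2 : ∑ j ∈ range r, Mn i.val j l = ∑ j : Fin r, M i j ⟨l, hl⟩ := by
        have h3 : ∀ j ∈ range r, Mn i.val j l = (if h : j < r then M i ⟨j, h⟩ ⟨l, hl⟩ else 0) := by
          intro j hj
          rw [Finset.mem_range] at hj
          simp only [hMn]
          rw [dif_pos ⟨i.isLt, hj, hl⟩, dif_pos hj]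
        rw [Finset.sum_congr rfl h3, sum_range_dite r (fun j => M i j ⟨l, hl⟩)]
      rw [hsplitTL, h1, h2, add_zero]
      exact hMrow i ⟨l, hl⟩
    · rcases Nat.lt_or_ge l (2*r) with hl2 | hl2
      · -- new symbols
        have h1 : ∑ j ∈ range r, Mn i.val j l = 0 :=
          Finset.sum_eq_zero (fun j _ => hMn0 _ _ _ (by omega))
        have h2 : ∑ j ∈ range r, fill i.val j l ≤ L := by
          have h3 : ∀ j ∈ range r, fill i.val j l
              = (if (((l - r) + (2*r - i.val)) - j) % r < dd i.val j then 1 else 0) := by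
            intro j hj
            rw [Finset.mem_range] at hj
            simp only [hfill]
            have h4 : (l - r) + (2*r - i.val - j) = ((l - r) + (2*r - i.val)) - j := by
              have : i.val < r := i.isLt
              omega
            by_cases hP : (((l - r) + (2*r - i.val)) - j) % r < dd i.val j
            · rw [if_pos hP, if_pos ⟨hl, hl2, by rw [h4]; exact hP⟩]
            · rw [if_neg hP, if_neg]
              rintro ⟨_, _, hcon⟩
              rw [h4] at hcon
              exact hP hcon
          rw [Finset.sum_congr rfl h3, sum_ite_card]
          apply count_inj_le r L ((l - r) + (2*r - i.val)) (by have := i.isLt; omega)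
          intro j _
          exact hddL i.val j
        rw [hsplitTL, h1, zero_add]
        exact h2
      · have h1 : ∑ j ∈ range r, Mn i.val j l = 0 :=
          Finset.sum_eq_zero (fun j _ => hMn0 _ _ _ (by omega))
        have h2 : ∑ j ∈ range r, fill i.val j l = 0 :=
          Finset.sum_eq_zero (fun j _ => hfill0 _ _ _ (Or.inr hl2))
        rw [hsplitTL, h1, h2]
        omega
  -- C3 : corner column-symbol counts
  have hC3 : ∀ (j : Fin r) (l : ℕ), ∑ i ∈ range r, TL i j.val l ≤ L := by
    intro j l
    have hsplitTL : ∑ i ∈ range r, TL i j.val l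
        = ∑ i ∈ range r, Mn i j.val l + ∑ i ∈ range r, fill i j.val l := by
      simp only [hTLdef]
      rw [← Finset.sum_add_distrib]
    rcases Nat.lt_or_ge l r with hl | hl
    · have h1 : ∑ i ∈ range r, fill i j.val l = 0 :=
        Finset.sum_eq_zero (fun i _ => hfill0 _ _ _ (Or.inl hl))
      have h2 : ∑ i ∈ range r, Mn i j.val l = ∑ i : Fin r, M i j ⟨l, hl⟩ := by
        have h3 : ∀ i ∈ range r, Mn i j.val l = (if h : i < r then M ⟨i, h⟩ j ⟨l, hl⟩ else 0) := by
          intro i hi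
          rw [Finset.mem_range] at hi
          simp only [hMn]
          rw [dif_pos ⟨hi, j.isLt, hl⟩, dif_pos hi]
        rw [Finset.sum_congr rfl h3, sum_range_dite r (fun i => M i j ⟨l, hl⟩)]
      rw [hsplitTL, h1, h2, add_zero]
      exact hMcol j ⟨l, hl⟩
    · rcases Nat.lt_or_ge l (2*r) with hl2 | hl2
      · have h1 : ∑ i ∈ range r, Mn i j.val l = 0 :=
          Finset.sum_eq_zero (fun i _ => hMn0 _ _ _ (by omega))
        have h2 : ∑ i ∈ range r, fill i j.val l ≤ L := by
          have h3 : ∀ i ∈ range r, fill i j.val l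
              = (if (((l - r) + (2*r - j.val)) - i) % r < dd i j.val then 1 else 0) := by
            intro i hi
            rw [Finset.mem_range] at hi
            simp only [hfill]
            have h4 : (l - r) + (2*r - i - j.val) = ((l - r) + (2*r - j.val)) - i := by
              have : j.val < r := j.isLt
              omega
            by_cases hP : (((l - r) + (2*r - j.val)) - i) % r < dd i j.val
            · rw [if_pos hP, if_pos ⟨hl, hl2, by rw [h4]; exact hP⟩]
            · rw [if_neg hP, if_neg]
              rintro ⟨_, _, hcon⟩
              rw [h4] at hcon
              exact hP hcon
          rw [Finset.sum_congr rfl h3, sum_ite_card]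
          apply count_inj_le r L ((l - r) + (2*r - j.val)) (by have := j.isLt; omega)
          intro i _
          exact hddL i j.val
        rw [hsplitTL, h1, zero_add]
        exact h2
      · have h1 : ∑ i ∈ range r, Mn i j.val l = 0 :=
          Finset.sum_eq_zero (fun i _ => hMn0 _ _ _ (by omega))
        have h2 : ∑ i ∈ range r, fill i j.val l = 0 :=
          Finset.sum_eq_zero (fun i _ => hfill0 _ _ _ (Or.inr hl2))
        rw [hsplitTL, h1, h2]
        omega
  -- row counts including fill
  set m' : ℕ → ℕ → ℕ := fun i l => ∑ j ∈ range r, TL i j l with hm'def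
  have hm'L : ∀ (i : Fin r) (l : ℕ), m' i.val l ≤ L := by
    intro i l
    simp only [hm'def]
    exact hC2 i l
  set D1 : Fin r → Fin n → ℕ := fun i l => L - m' i.val l.val with hD1def
  have hrowtot : ∀ i : Fin r, ∑ l ∈ range n, m' i.val l = r * L := by
    intro i
    simp only [hm'def]
    rw [Finset.sum_comm]
    have h1 : ∀ j ∈ range r, ∑ l ∈ range n, TL i.val j l = L := by
      intro j hj
      rw [Finset.mem_range] at hj
      exact hC1 i ⟨j, hj⟩
    rw [Finset.sum_congr rfl h1, Finset.sum_const, Finset.card_range, smul_eq_mul]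
  have hD1a : ∀ i : Fin r, ∑ l : Fin n, D1 i l = (n - r) * L := by
    intro i
    have hconv : ∑ l : Fin n, D1 i l = ∑ l ∈ range n, (L - m' i.val l) := by
      simp only [hD1def]
      exact Fin.sum_univ_eq_sum_range (fun l => L - m' i.val l) n
    have h1 : ∑ l ∈ range n, (L - m' i.val l) + ∑ l ∈ range n, m' i.val l
        = ∑ l ∈ range n, L := by
      rw [← Finset.sum_add_distrib]
      apply Finset.sum_congr rfl
      intro l hl
      have := hm'L i l
      omega
    rw [Finset.sum_const, Finset.card_range, smul_eq_mul] at h1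
    have h2 := hrowtot i
    have h3 : (n-r)*L + r*L = n*L := by
      rw [← Nat.add_mul, Nat.sub_add_cancel hrn]
    omega
  have hD1b : ∀ (i : Fin r) (l : Fin n), D1 i l ≤ n - r := by
    intro i l
    simp only [hD1def]
    omega
  have hD1d : ∀ l : Fin n, ∑ i : Fin r, D1 i l ≤ (n - r) * L := by
    intro l
    have h1 : ∑ i : Fin r, D1 i l ≤ ∑ _i : Fin r, L := by
      apply Finset.sum_le_sum
      intro i _
      simp only [hD1def]
      omega
    rw [Finset.sum_const, Finset.card_univ, Fintype.card_fin, smul_eq_mul] at h1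
    have h2 : r * L ≤ (n-r)*L := Nat.mul_le_mul_right L (by omega)
    omega
  obtain ⟨Y, hY1, hY2, hY3, hY4⟩ := FOLD L (n-r) D1 hD1a hD1b hD1d
  -- top-rows array
  set Ntop : ℕ → ℕ → ℕ → ℕ := fun i j l =>
    if _hij : i < r ∧ j < r then TL i j l
    else if h2 : i < r ∧ j - r < n - r ∧ l < n then
      Y ⟨j - r, h2.2.1⟩ ⟨i, h2.1⟩ ⟨l, h2.2.2⟩ else 0
    with hNtopdef
  have hNtop1 : ∀ i j l, Ntop i j l ≤ 1 := by
    intro i j l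
    simp only [hNtopdef]
    split
    · exact hTL1 i j l
    · split
      · apply hY1
      · omega
  have hNtopTL : ∀ i j l, i < r → j < r → Ntop i j l = TL i j l := by
    intro i j l h1 h2
    simp only [hNtopdef]
    rw [dif_pos ⟨h1, h2⟩]
  have hNtopY : ∀ i j l (hi : i < r) (hj1 : r ≤ j) (hj2 : j - r < n - r) (hl : l < n),
      Ntop i j l = Y ⟨j - r, hj2⟩ ⟨i, hi⟩ ⟨l, hl⟩ := by
    intro i j l hi hj1 hj2 hl
    simp only [hNtopdef]
    rw [dif_neg (by omega), dif_pos ⟨hi, hj2, hl⟩]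
  have hcell : ∀ (i : Fin r) (j : ℕ), j < n → ∑ l ∈ range n, Ntop i.val j l = L := by
    intro i j hjn
    rcases Nat.lt_or_ge j r with hj | hj
    · have h1 : ∀ l ∈ range n, Ntop i.val j l = TL i.val j l :=
        fun l _ => hNtopTL _ _ _ i.isLt hj
      rw [Finset.sum_congr rfl h1]
      exact hC1 i ⟨j, hj⟩
    · have hj2 : j - r < n - r := by omega
      have h1 : ∀ l ∈ range n, Ntop i.val j l
          = (if h : l < n then Y ⟨j - r, hj2⟩ ⟨i.val, i.isLt⟩ ⟨l, h⟩ else 0) := by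
        intro l hl
        rw [Finset.mem_range] at hl
        rw [hNtopY i.val j l i.isLt hj hj2 hl, dif_pos hl]
      rw [Finset.sum_congr rfl h1,
        sum_range_dite n (fun l => Y ⟨j - r, hj2⟩ ⟨i.val, i.isLt⟩ l)]
      exact hY2 ⟨j - r, hj2⟩ ⟨i.val, i.isLt⟩
  have hrowsym : ∀ (i : Fin r) (l : Fin n), ∑ j ∈ range n, Ntop i.val j l.val = L := by
    intro i l
    rw [split_at n r hrn]
    have h1 : ∀ j ∈ range r, Ntop i.val j l.val = TL i.val j l.val := by
      intro j hj
      rw [Finset.mem_range] at hj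
      exact hNtopTL _ _ _ i.isLt hj
    have h2 : ∀ k ∈ range (n - r), Ntop i.val (r + k) l.val
        = (if h : k < n - r then Y ⟨k, h⟩ ⟨i.val, i.isLt⟩ l else 0) := by
      intro k hk
      rw [Finset.mem_range] at hk
      have hk2 : r + k - r = k := by omega
      rw [hNtopY i.val (r + k) l.val i.isLt (by omega) (by omega) l.isLt, dif_pos hk]
      simp only [hk2]
    rw [Finset.sum_congr rfl h1, Finset.sum_congr rfl h2,
      sum_range_dite (n - r) (fun k => Y k ⟨i.val, i.isLt⟩ l)]
    have h3 : ∑ k : Fin (n - r), Y k ⟨i.val, i.isLt⟩ l = D1 ⟨i.val, i.isLt⟩ l :=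
      hY3 _ _
    rw [h3]
    have h4 : m' i.val l.val ≤ L := hm'L i l.val
    have h5 : ∑ j ∈ range r, TL i.val j l.val = m' i.val l.val := rfl
    have h6 : D1 ⟨i.val, i.isLt⟩ l = L - m' i.val l.val := rfl
    omega
  -- top column counts
  set tc : ℕ → ℕ → ℕ := fun j l => ∑ i ∈ range r, Ntop i j l with htcdef
  have htcL : ∀ (j l : ℕ), j < n → l < n → tc j l ≤ L := by
    intro j l hjn hln
    simp only [htcdef]
    rcases Nat.lt_or_ge j r with hj | hj
    · have h1 : ∀ i ∈ range r, Ntop i j l = TL i j l := by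
        intro i hi
        rw [Finset.mem_range] at hi
        exact hNtopTL _ _ _ hi hj
      rw [Finset.sum_congr rfl h1]
      exact hC3 ⟨j, hj⟩ l
    · have hj2 : j - r < n - r := by omega
      have h1 : ∀ i ∈ range r, Ntop i j l
          = (if h : i < r then Y ⟨j - r, hj2⟩ ⟨i, h⟩ ⟨l, hln⟩ else 0) := by
        intro i hi
        rw [Finset.mem_range] at hi
        rw [hNtopY i j l hi hj hj2 hln, dif_pos hi]
      rw [Finset.sum_congr rfl h1,
        sum_range_dite r (fun i => Y ⟨j - r, hj2⟩ i ⟨l, hln⟩)]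
      exact hY4 ⟨j - r, hj2⟩ ⟨l, hln⟩
  have htcrow : ∀ j : ℕ, j < n → ∑ l ∈ range n, tc j l = r * L := by
    intro j hjn
    simp only [htcdef]
    rw [Finset.sum_comm]
    have h1 : ∀ i ∈ range r, ∑ l ∈ range n, Ntop i j l = L := by
      intro i hi
      rw [Finset.mem_range] at hi
      exact hcell ⟨i, hi⟩ j hjn
    rw [Finset.sum_congr rfl h1, Finset.sum_const, Finset.card_range, smul_eq_mul]
  have htccol : ∀ l : Fin n, ∑ j ∈ range n, tc j l.val = r * L := by
    intro l
    simp only [htcdef]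
    rw [Finset.sum_comm]
    have h1 : ∀ i ∈ range r, ∑ j ∈ range n, Ntop i j l.val = L := by
      intro i hi
      rw [Finset.mem_range] at hi
      exact hrowsym ⟨i, hi⟩ l
    rw [Finset.sum_congr rfl h1, Finset.sum_const, Finset.card_range, smul_eq_mul]
  set A2 : Fin n → Fin n → ℕ := fun j l => L - tc j.val l.val with hA2def
  have hA2a : ∀ j : Fin n, ∑ l : Fin n, A2 j l = (n - r) * L := by
    intro j
    have hconv : ∑ l : Fin n, A2 j l = ∑ l ∈ range n, (L - tc j.val l) := by
      simp only [hA2def]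
      exact Fin.sum_univ_eq_sum_range (fun l => L - tc j.val l) n
    have h1 : ∑ l ∈ range n, (L - tc j.val l) + ∑ l ∈ range n, tc j.val l
        = ∑ l ∈ range n, L := by
      rw [← Finset.sum_add_distrib]
      apply Finset.sum_congr rfl
      intro l hl
      rw [Finset.mem_range] at hl
      have := htcL j.val l j.isLt hl
      omega
    rw [Finset.sum_const, Finset.card_range, smul_eq_mul] at h1
    have h2 := htcrow j.val j.isLt
    have h3 : (n-r)*L + r*L = n*L := by
      rw [← Nat.add_mul, Nat.sub_add_cancel hrn]
    omega
  have hA2b : ∀ (j l : Fin n), A2 j l ≤ n - r := by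
    intro j l
    simp only [hA2def]
    omega
  have hA2d : ∀ l : Fin n, ∑ j : Fin n, A2 j l = (n - r) * L := by
    intro l
    have hconv : ∑ j : Fin n, A2 j l = ∑ j ∈ range n, (L - tc j l.val) := by
      simp only [hA2def]
      exact Fin.sum_univ_eq_sum_range (fun j => L - tc j l.val) n
    have h1 : ∑ j ∈ range n, (L - tc j l.val) + ∑ j ∈ range n, tc j l.val
        = ∑ j ∈ range n, L := by
      rw [← Finset.sum_add_distrib]
      apply Finset.sum_congr rfl
      intro j hj
      rw [Finset.mem_range] at hj
      have := htcL j l.val hj l.isLt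
      omega
    rw [Finset.sum_const, Finset.card_range, smul_eq_mul] at h1
    have h2 := htccol l
    have h3 : (n-r)*L + r*L = n*L := by
      rw [← Nat.add_mul, Nat.sub_add_cancel hrn]
    omega
  obtain ⟨Z, hZ1, hZ2, hZ3, hZ4⟩ := FOLD L (n-r) A2 hA2a hA2b (fun l => le_of_eq (hA2d l))
  have hZrow : ∀ (k : Fin (n - r)) (l : Fin n), ∑ j : Fin n, Z k j l = L := by
    intro k l
    apply all_eq_of_sum_eq (f := fun k => ∑ j : Fin n, Z k j l) (fun k => hZ4 k l)
    rw [Finset.sum_comm]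
    have h1 : ∀ j : Fin n, ∑ k : Fin (n - r), Z k j l = A2 j l := fun j => hZ3 j l
    rw [Finset.sum_congr rfl (fun j _ => h1 j)]
    exact hA2d l
  -- final array
  set Nf : ℕ → ℕ → ℕ → ℕ := fun i j l =>
    if _hi : i < r then Ntop i j l
    else if h2 : i - r < n - r ∧ j < n ∧ l < n then
      Z ⟨i - r, h2.1⟩ ⟨j, h2.2.1⟩ ⟨l, h2.2.2⟩ else 0
    with hNfdef
  have hNfTop : ∀ i j l, i < r → Nf i j l = Ntop i j l := by
    intro i j l hi
    simp only [hNfdef]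
    rw [dif_pos hi]
  have hNfZ : ∀ i j l (hi : r ≤ i) (hi2 : i - r < n - r) (hj : j < n) (hl : l < n),
      Nf i j l = Z ⟨i - r, hi2⟩ ⟨j, hj⟩ ⟨l, hl⟩ := by
    intro i j l hi hi2 hj hl
    simp only [hNfdef]
    rw [dif_neg (by omega), dif_pos ⟨hi2, hj, hl⟩]
  refine ⟨fun i j l => Nf i.val j.val l.val, ?_, ?_, ?_, ?_, ?_⟩
  · -- cell sums
    intro i j
    rw [Fin.sum_univ_eq_sum_range (fun l => Nf i.val j.val l) n]
    rcases Nat.lt_or_ge i.val r with hi | hi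
    · have h1 : ∀ l ∈ range n, Nf i.val j.val l = Ntop i.val j.val l :=
        fun l _ => hNfTop _ _ _ hi
      rw [Finset.sum_congr rfl h1]
      exact hcell ⟨i.val, hi⟩ j.val j.isLt
    · have hi2 : i.val - r < n - r := by have := i.isLt; omega
      have h1 : ∀ l ∈ range n, Nf i.val j.val l
          = (if h : l < n then Z ⟨i.val - r, hi2⟩ ⟨j.val, j.isLt⟩ ⟨l, h⟩ else 0) := by
        intro l hl
        rw [Finset.mem_range] at hl
        rw [hNfZ i.val j.val l hi hi2 j.isLt hl, dif_pos hl]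
      rw [Finset.sum_congr rfl h1,
        sum_range_dite n (fun l => Z ⟨i.val - r, hi2⟩ ⟨j.val, j.isLt⟩ l)]
      exact hZ2 _ _
  · -- row-symbol sums
    intro i l
    rw [Fin.sum_univ_eq_sum_range (fun j => Nf i.val j l.val) n]
    rcases Nat.lt_or_ge i.val r with hi | hi
    · have h1 : ∀ j ∈ range n, Nf i.val j l.val = Ntop i.val j l.val :=
        fun j _ => hNfTop _ _ _ hi
      rw [Finset.sum_congr rfl h1]
      exact hrowsym ⟨i.val, hi⟩ l
    · have hi2 : i.val - r < n - r := by have := i.isLt; omega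
      have h1 : ∀ j ∈ range n, Nf i.val j l.val
          = (if h : j < n then Z ⟨i.val - r, hi2⟩ ⟨j, h⟩ l else 0) := by
        intro j hj
        rw [Finset.mem_range] at hj
        rw [hNfZ i.val j l.val hi hi2 hj l.isLt, dif_pos hj]
      rw [Finset.sum_congr rfl h1,
        sum_range_dite n (fun j => Z ⟨i.val - r, hi2⟩ j l)]
      exact hZrow _ _
  · -- column-symbol sums
    intro j l
    rw [Fin.sum_univ_eq_sum_range (fun i => Nf i j.val l.val) n]
    rw [split_at n r hrn]
    have h1 : ∀ i ∈ range r, Nf i j.val l.val = Ntop i j.val l.val := by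
      intro i hi
      rw [Finset.mem_range] at hi
      exact hNfTop _ _ _ hi
    have h2 : ∀ k ∈ range (n - r), Nf (r + k) j.val l.val
        = (if h : k < n - r then Z ⟨k, h⟩ j l else 0) := by
      intro k hk
      rw [Finset.mem_range] at hk
      have hk2 : r + k - r = k := by omega
      rw [hNfZ (r + k) j.val l.val (by omega) (by omega) j.isLt l.isLt, dif_pos hk]
      simp only [hk2]
    rw [Finset.sum_congr rfl h1, Finset.sum_congr rfl h2,
      sum_range_dite (n - r) (fun k => Z k j l)]
    have h3 : ∑ k : Fin (n - r), Z k j l = A2 j l := hZ3 j l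
    have h4 : A2 j l = L - tc j.val l.val := rfl
    have h5 : ∑ i ∈ range r, Ntop i j.val l.val = tc j.val l.val := rfl
    have h6 : tc j.val l.val ≤ L := htcL j.val l.val j.isLt l.isLt
    omega
  · -- simplicity
    intro i j l
    show Nf i.val j.val l.val ≤ 1
    rcases Nat.lt_or_ge i.val r with hi | hi
    · rw [hNfTop _ _ _ hi]
      exact hNtop1 _ _ _
    · have hi2 : i.val - r < n - r := by have := i.isLt; omega
      rw [hNfZ i.val j.val l.val hi hi2 j.isLt l.isLt]
      apply hZ1
  · -- domination
    intro i j l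
    show M i j l ≤ Nf i.val j.val l.val
    have hi : i.val < r := i.isLt
    have hj : j.val < r := j.isLt
    have hl : l.val < r := l.isLt
    rw [hNfTop _ _ _ hi, hNtopTL _ _ _ hi hj]
    have h1 : TL i.val j.val l.val = Mn i.val j.val l.val + fill i.val j.val l.val := rfl
    have h2 : Mn i.val j.val l.val = M i j l := by
      simp only [hMn]
      rw [dif_pos ⟨hi, hj, hl⟩]
    omega
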